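/- For a Pomeau–Manneville map F(x) = x(1 + 2^α x^α) on [0,1/2] and 2x - 1 on (1/2,1], with 0 < α < 1, the first return time r of points in Y = (1/2, 1] to Y under F satisfies the tail bound: Leb(x ∈ Y : r(x) > n) = O(n^{-1/α}). In particular, if α < 1/2 the tail exponent β = 1/α satisfies β > 2. -/

import Mathlib

open MeasureTheory

/-- The Pomeau–Manneville map with parameter `α`. -/
noncomputable def pmMap (α : ℝ) (x : ℝ) : ℝ :=
  if x ≤ 1 / 2 then x * (1 + 2 ^ α * x ^ α) else 2 * x - 1

/-- Chord inequality for the concave function `x ↦ x^α` between `1` and `2`. -/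
lemma pm_chord (α : ℝ) (hα₀ : 0 < α) (hα₁ : α < 1) {t : ℝ} (ht0 : 0 ≤ t) (ht1 : t ≤ 1) :
    1 + (2 ^ α - 1) * t ≤ (1 + t) ^ α := by
  have hc := (Real.concaveOn_rpow hα₀.le hα₁.le).2 (Set.mem_Ici.mpr (zero_le_one (α := ℝ)))
    (Set.mem_Ici.mpr (by norm_num : (0:ℝ) ≤ 2))
    (show (0:ℝ) ≤ 1 - t by linarith) ht0 (show (1 - t) + t = 1 by ring)
  have h1 : ((1 - t) • (1 : ℝ) + t • (2 : ℝ)) = 1 + t := by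
    simp [smul_eq_mul]; ring
  rw [h1] at hc
  have h2 : (1 : ℝ) ^ α = 1 := Real.one_rpow α
  simp only [smul_eq_mul, h2] at hc
  nlinarith [hc]

/-- The left branch maps `(0, 1/2]` into `(0, 1]`. -/
lemma pm_left_mem (α : ℝ) (hα₀ : 0 < α) {z : ℝ} (hz0 : 0 < z) (hz2 : z ≤ 1 / 2) :
    0 < pmMap α z ∧ pmMap α z ≤ 1 := by
  have h2z : (2:ℝ) ^ α * z ^ α = (2 * z) ^ α := (Real.mul_rpow (by norm_num) hz0.le).symm
  have hle : (2 * z) ^ α ≤ 1 := Real.rpow_le_one (by linarith) (by linarith) hα₀.le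
  have hge : 0 < (2 * z) ^ α := Real.rpow_pos_of_pos (by linarith) α
  rw [pmMap, if_pos hz2, h2z]
  constructor
  · positivity
  · nlinarith

/-- Key estimate: if the first `n` iterates of `y` stay in `(0, 1/2]`, then
`(y^α)⁻¹ ≥ n (2^α - 1)`. -/
lemma pm_key (α : ℝ) (hα₀ : 0 < α) (hα₁ : α < 1) :
    ∀ n : ℕ, ∀ y : ℝ, 0 < y → (∀ m, m < n → (pmMap α)^[m] y ≤ 1 / 2) →
    (n : ℝ) * (2 ^ α - 1) ≤ (y ^ α)⁻¹ := by
  intro n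
  induction n with
  | zero =>
      intro y hy _
      simp only [Nat.cast_zero, zero_mul]
      positivity
  | succ n ih =>
      intro y hy hm
      have hy2 : y ≤ 1 / 2 := by simpa using hm 0 (Nat.succ_pos n)
      have h2α : (1:ℝ) < 2 ^ α :=
        Real.one_lt_rpow_iff_of_pos (by norm_num) |>.mpr (Or.inl ⟨by norm_num, hα₀⟩)
      set t : ℝ := 2 ^ α * y ^ α with ht_def
      have hyα : (0:ℝ) < y ^ α := Real.rpow_pos_of_pos hy α
      have htpos : 0 < t := mul_pos (by positivity) hyα
      have ht2y : t = (2 * y) ^ α := (Real.mul_rpow (by norm_num) hy.le).symm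
      have ht1 : t ≤ 1 := by
        rw [ht2y]; exact Real.rpow_le_one (by linarith) (by linarith) hα₀.le
      set z : ℝ := pmMap α y with hz_def
      have hz_eq : z = y * (1 + t) := by rw [hz_def, pmMap, if_pos hy2]
      have hzpos : 0 < z := by rw [hz_eq]; positivity
      have hzle : ∀ m, m < n → (pmMap α)^[m] z ≤ 1 / 2 := by
        intro m hmn
        have := hm (m + 1) (by omega)
        rwa [Function.iterate_succ_apply] at this
      have ihz := ih z hzpos hzle
      have hzα : z ^ α = y ^ α * (1 + t) ^ α := by
        rw [hz_eq]; exact Real.mul_rpow hy.le (by linarith)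
      have h1t : (0:ℝ) < (1 + t) ^ α := Real.rpow_pos_of_pos (by linarith) α
      have hzαpos : (0:ℝ) < z ^ α := Real.rpow_pos_of_pos hzpos α
      have hchord : 1 + (2 ^ α - 1) * t ≤ (1 + t) ^ α := pm_chord α hα₀ hα₁ htpos.le ht1
      have h1t_le : (1 + t) ^ α ≤ 2 ^ α :=
        Real.rpow_le_rpow (by linarith) (by linarith) hα₀.le
      -- (z^α)⁻¹ * t = 2^α / (1+t)^α ≥ 1
      have hCt : 1 ≤ (z ^ α)⁻¹ * t := by
        have : (z ^ α)⁻¹ * t = 2 ^ α * ((1 + t) ^ α)⁻¹ := by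
          rw [hzα, ht_def]
          field_simp
        rw [this]
        have hdiv : 1 ≤ 2 ^ α / (1 + t) ^ α := (one_le_div h1t).mpr h1t_le
        rwa [div_eq_mul_inv] at hdiv
      -- (y^α)⁻¹ = (z^α)⁻¹ * (1+t)^α
      have hA : (y ^ α)⁻¹ = (z ^ α)⁻¹ * (1 + t) ^ α := by
        rw [hzα]; field_simp
      have hzαinv : (0:ℝ) < (z ^ α)⁻¹ := by positivity
      have : (y ^ α)⁻¹ ≥ (z ^ α)⁻¹ + (2 ^ α - 1) := by
        have h3 : (z ^ α)⁻¹ * (1 + t) ^ α ≥ (z ^ α)⁻¹ * (1 + (2 ^ α - 1) * t) :=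
          mul_le_mul_of_nonneg_left hchord hzαinv.le
        have h4 : (z ^ α)⁻¹ * (1 + (2 ^ α - 1) * t)
            = (z ^ α)⁻¹ + (2 ^ α - 1) * ((z ^ α)⁻¹ * t) := by ring
        rw [hA]
        nlinarith [hCt]
      push_cast
      nlinarith [ihz]

/-- Tail bound for the first return time of the Pomeau–Manneville map to
`Y = (1/2, 1]`: `Leb(x ∈ Y : r(x) > n) = O(n^{-1/α})`. -/
theorem pomeau_manneville_return_tail (α : ℝ) (hα₀ : 0 < α) (hα₁ : α < 1) :
    ∃ C : ℝ, 0 < C ∧ ∀ n : ℕ, 1 ≤ n →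
      (volume {x : ℝ | x ∈ Set.Ioc (1/2 : ℝ) 1 ∧
        ∀ m : ℕ, 1 ≤ m → m ≤ n → (pmMap α)^[m] x ∉ Set.Ioc (1/2 : ℝ) 1}).toReal
        ≤ C * (n : ℝ) ^ (-(1 / α)) := by
  have h2α : (1:ℝ) < 2 ^ α :=
    Real.one_lt_rpow_iff_of_pos (by norm_num) |>.mpr (Or.inl ⟨by norm_num, hα₀⟩)
  set c : ℝ := 2 ^ α - 1 with hc_def
  have hc : 0 < c := by linarith
  refine ⟨c ^ (-(1/α)), Real.rpow_pos_of_pos hc _, ?_⟩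
  intro n hn
  set B : ℝ := ((n : ℝ) * c) ^ (-(1/α)) with hB_def
  have hnc : (0:ℝ) < (n:ℝ) * c := by
    have : (1:ℝ) ≤ (n:ℝ) := by exact_mod_cast hn
    nlinarith
  have hBpos : 0 < B := Real.rpow_pos_of_pos hnc _
  -- the set is contained in Ioc (1/2) ((1+B)/2)
  have hsub : {x : ℝ | x ∈ Set.Ioc (1/2 : ℝ) 1 ∧
      ∀ m : ℕ, 1 ≤ m → m ≤ n → (pmMap α)^[m] x ∉ Set.Ioc (1/2 : ℝ) 1}
      ⊆ Set.Ioc (1/2 : ℝ) ((1 + B) / 2) := by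
    rintro x ⟨⟨hx1, hx2⟩, hmem⟩
    set y : ℝ := 2 * x - 1 with hy_def
    have hypos : 0 < y := by simp only [hy_def]; linarith
    have hy1 : y ≤ 1 := by simp only [hy_def]; linarith
    have hFx : pmMap α x = y := by rw [pmMap, if_neg (by linarith)]
    have hiterx : ∀ m : ℕ, (pmMap α)^[m + 1] x = (pmMap α)^[m] y := by
      intro m; rw [Function.iterate_succ_apply, hFx]
    -- iterates of y stay in (0, 1/2]
    have hiter : ∀ m, m < n → 0 < (pmMap α)^[m] y ∧ (pmMap α)^[m] y ≤ 1 / 2 := by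
      intro m
      induction m with
      | zero =>
          intro _
          have h1 := hmem 1 le_rfl hn
          rw [hiterx 0, Function.iterate_zero_apply] at h1
          simp only [Set.mem_Ioc, not_and, not_le] at h1
          refine ⟨hypos, ?_⟩
          by_contra hcon
          push_neg at hcon
          have := h1 hcon
          simp only [Function.iterate_zero_apply] at *
          linarith
      | succ m ihm =>
          intro hmn
          obtain ⟨hz0, hz2⟩ := ihm (by omega)
          have hFz := pm_left_mem α hα₀ hz0 hz2
          rw [← Function.iterate_succ_apply' (pmMap α) m y] at hFz
          have h1 := hmem (m + 2) (by omega) (by omega)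
          rw [show m + 2 = (m + 1) + 1 by rfl, hiterx (m + 1)] at h1
          simp only [Set.mem_Ioc, not_and, not_le] at h1
          refine ⟨hFz.1, ?_⟩
          by_contra hcon
          push_neg at hcon
          have := h1 hcon
          linarith [hFz.2]
    have hkey := pm_key α hα₀ hα₁ n y hypos (fun m hm => (hiter m hm).2)
    -- deduce y ≤ B
    have hyα : (0:ℝ) < y ^ α := Real.rpow_pos_of_pos hypos α
    have hinv : y ^ α ≤ ((n:ℝ) * c)⁻¹ := by
      rw [← one_div, le_div_iff₀ hnc]
      calc y ^ α * ((n:ℝ) * c) ≤ y ^ α * (y ^ α)⁻¹ := by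
            exact mul_le_mul_of_nonneg_left hkey hyα.le
        _ = 1 := by field_simp
    have hyB : y ≤ B := by
      have h5 : (y ^ α) ^ (1/α) ≤ (((n:ℝ) * c)⁻¹) ^ (1/α) :=
        Real.rpow_le_rpow hyα.le hinv (by positivity)
      have h6 : (y ^ α) ^ (1/α) = y := by
        rw [← Real.rpow_mul hypos.le]
        rw [show α * (1/α) = 1 by field_simp]
        exact Real.rpow_one y
      have h7 : (((n:ℝ) * c)⁻¹) ^ (1/α) = B := by
        rw [← Real.rpow_neg_one ((n:ℝ) * c), ← Real.rpow_mul hnc.le]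
        norm_num [hB_def]
      rw [h6, h7] at h5
      exact h5
    exact ⟨hx1, by simp only [hy_def] at hyB; linarith⟩
  have hvol : (volume {x : ℝ | x ∈ Set.Ioc (1/2 : ℝ) 1 ∧
      ∀ m : ℕ, 1 ≤ m → m ≤ n → (pmMap α)^[m] x ∉ Set.Ioc (1/2 : ℝ) 1}).toReal ≤ B / 2 := by
    have h1 := measure_mono (μ := volume) hsub
    rw [Real.volume_Ioc] at h1
    have h2 : ((1 + B) / 2 - 1 / 2 : ℝ) = B / 2 := by ring
    rw [h2] at h1
    calc _ ≤ (ENNReal.ofReal (B / 2)).toReal := ENNReal.toReal_mono ENNReal.ofReal_ne_top h1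
      _ = B / 2 := ENNReal.toReal_ofReal (by linarith)
  refine hvol.trans ?_
  have hBsplit : B = (n:ℝ) ^ (-(1/α)) * c ^ (-(1/α)) := by
    rw [hB_def, Real.mul_rpow (by positivity) hc.le]
  rw [hBsplit]
  have hnpos : (0:ℝ) < (n:ℝ) ^ (-(1/α)) := Real.rpow_pos_of_pos (by positivity) _
  have hcpos : (0:ℝ) < c ^ (-(1/α)) := Real.rpow_pos_of_pos hc _
  nlinarith
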